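/- For every integer k ≥ 2 and every real z ≥ 0, one has f_{k−1}(z) = 1/e_k(z) + (z·e_{k−1}(z)/(k·e_k(z)))·f_k(z). -/

import Mathlib

open scoped Nat

/-- `f k z = e^{-z} · ₁F₁(1; k+1; z) = e^{-z} · Σ_{r=0}^∞ k! z^r / (r+k)!`. -/
noncomputable def rieszF (k : ℕ) (z : ℝ) : ℝ :=
  Real.exp (-z) * ∑' r : ℕ, (k ! : ℝ) * z ^ r / (r + k)!

/-- `e k z = Σ_{r=0}^{k-1} z^r / r!`, the sum of the first `k` terms of the
exponential series. -/
noncomputable def expPartial (k : ℕ) (z : ℝ) : ℝ :=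
  ∑ r ∈ Finset.range k, z ^ r / r !

lemma exp_tsum (z : ℝ) : Real.exp z = ∑' n : ℕ, z ^ n / n ! := by
  rw [Real.exp_eq_exp_ℝ, NormedSpace.exp_eq_tsum_div]

lemma tsum_shift (k : ℕ) (z : ℝ) :
    ∑' r : ℕ, z ^ (r + k) / (r + k)! = Real.exp z - expPartial k z := by
  have hs := Real.summable_pow_div_factorial z
  have h := Summable.sum_add_tsum_nat_add k hs
  rw [exp_tsum, expPartial]
  linarith [h]

lemma expPartial_pos (k : ℕ) (hk : 1 ≤ k) (z : ℝ) (hz : 0 ≤ z) :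
    1 ≤ expPartial k z := by
  rw [expPartial]
  calc (1:ℝ) = ∑ r ∈ Finset.range 1, z ^ r / r ! := by simp
  _ ≤ _ := by
    apply Finset.sum_le_sum_of_subset_of_nonneg
    · exact Finset.range_subset_range.mpr hk
    · intro i _ _; positivity

lemma rieszF_eq (k : ℕ) (z : ℝ) (hz : 0 < z) :
    rieszF k z = (k ! : ℝ) / z ^ k * (1 - Real.exp (-z) * expPartial k z) := by
  rw [rieszF]
  have h1 : ∀ r : ℕ, (k ! : ℝ) * z ^ r / (r + k)! = (k ! / z ^ k) * (z ^ (r + k) / (r + k)!) := by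
    intro r
    field_simp [pow_add]
    ring
  rw [tsum_congr h1, tsum_mul_left, tsum_shift]
  have key : Real.exp (-z) * Real.exp z = 1 := by rw [← Real.exp_add]; simp
  linear_combination ((k ! : ℝ) / z ^ k) * key

theorem rieszF_step_recursion (k : ℕ) (hk : 2 ≤ k) (z : ℝ) (hz : 0 ≤ z) :
    rieszF (k - 1) z =
      1 / expPartial k z
        + (z * expPartial (k - 1) z / (k * expPartial k z)) * rieszF k z := by
  obtain ⟨m, rfl⟩ : ∃ m, k = m + 1 := ⟨k - 1, (Nat.succ_pred_eq_of_pos (by omega)).symm⟩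
  have hm : 1 ≤ m := by omega
  simp only [Nat.add_sub_cancel]
  rcases eq_or_lt_of_le hz with rfl | hz'
  · have h1 : rieszF m 0 = 1 := by
      rw [rieszF, tsum_eq_single 0 (by intro b hb; simp [zero_pow hb])]
      simp [Nat.factorial_ne_zero]
    have h2 : rieszF (m+1) 0 = 1 := by
      rw [rieszF, tsum_eq_single 0 (by intro b hb; simp [zero_pow hb])]
      simp [Nat.factorial_ne_zero]
    have h3 : ∀ j, 1 ≤ j → expPartial j 0 = 1 := by
      intro j hj
      rw [expPartial, Finset.sum_eq_single 0 (by intro b _ hb; simp [zero_pow hb])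
        (by intro h; simp at h; omega)]
      simp
    rw [h1, h2, h3 _ hm, h3 _ (by omega)]
    simp
  · have hek : expPartial (m + 1) z = expPartial m z + z ^ m / m ! := by
      rw [expPartial, expPartial, Finset.sum_range_succ]
    have hem := expPartial_pos m hm z hz
    have hem1 := expPartial_pos (m+1) (by omega) z hz
    rw [rieszF_eq m z hz', rieszF_eq (m+1) z hz', hek]
    have hfact : ((m+1)! : ℝ) = (m+1) * m ! := by
      push_cast [Nat.factorial_succ]; ring
    rw [hfact]
    have hmf : (0:ℝ) < (m ! : ℝ) := by positivity
    have hne1 : expPartial m z ≠ 0 := by linarith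
    have hne2 : expPartial m z + z ^ m / m ! ≠ 0 := by rw [← hek]; linarith
    have hzne : z ≠ 0 := ne_of_gt hz'
    field_simp
    push_cast
    ring
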